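/- For every integer k ≥ 1, the squared L² norm of the k-fold standard heat kernel over the simplex equals ∫_{Δ_k} ∫_{ℝ^k} ϱ_k(t,x)² dx dt = 1 / (2^k · Γ(k/2 + 1)), where Γ is the Gamma function. -/

import Mathlib

open MeasureTheory Real

/-- Standard heat kernel `ϱ(t,x,y) = (1/√(2πt)) exp(-(y-x)²/(2t))`. -/
noncomputable def heatKernel (t x y : ℝ) : ℝ :=
  (1 / Real.sqrt (2 * π * t)) * Real.exp (-(y - x) ^ 2 / (2 * t))

/-- The previous coordinate, with the convention that the `0`-th predecessor is `0`:
`prev v j = v (j-1)` for `j ≥ 1` and `prev v 0 = 0`. -/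
def prev {k : ℕ} (v : Fin k → ℝ) (j : Fin k) : ℝ :=
  if h : (j : ℕ) = 0 then 0 else v ⟨(j : ℕ) - 1, by have := j.isLt; omega⟩

/-- The open simplex `Δ_k = {t : 0 < t₁ < t₂ < ⋯ < t_k ≤ 1}`. -/
def simplex (k : ℕ) : Set (Fin k → ℝ) :=
  {t | StrictMono t ∧ ∀ j, t j ∈ Set.Ioc (0 : ℝ) 1}

/-- The `k`-fold standard heat kernel `ϱ_k(t,x) = ∏_{j=1}^k ϱ(t_j - t_{j-1}, x_{j-1}, x_j)`,
with the conventions `t₀ = 0`, `x₀ = 0`. -/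
noncomputable def heatKernelFold {k : ℕ} (t x : Fin k → ℝ) : ℝ :=
  ∏ j : Fin k, heatKernel (t j - prev t j) (prev x j) (x j)

namespace HKAux

open scoped ENNReal

lemma prev_eq_zero {k : ℕ} (v : Fin k → ℝ) (j : Fin k) (h : (j : ℕ) = 0) : prev v j = 0 :=
  dif_pos h

lemma prev_eq {k : ℕ} (v : Fin k → ℝ) (j : Fin k) (h : (j : ℕ) ≠ 0) :
    prev v j = v ⟨(j : ℕ) - 1, by have := j.isLt; omega⟩ :=
  dif_neg h

lemma measurable_prev {k : ℕ} (j : Fin k) : Measurable (fun v : Fin k → ℝ => prev v j) := by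
  by_cases h : (j : ℕ) = 0
  · simp only [prev, dif_pos h]; exact measurable_const
  · simp only [prev, dif_neg h]; exact measurable_pi_apply _

lemma cons_mk_succ {k : ℕ} (x : ℝ) (p : Fin k → ℝ) (m : ℕ) (h : m + 1 < k + 1) :
    (Fin.cons x p : Fin (k + 1) → ℝ) ⟨m + 1, h⟩ = p ⟨m, by omega⟩ := by
  have : (⟨m + 1, h⟩ : Fin (k + 1)) = Fin.succ ⟨m, by omega⟩ := rfl
  rw [this, Fin.cons_succ]

/-- The key translation identity for increments of `Fin.cons a (y + a)`. -/
lemma diff_cons_shift {k : ℕ} (a : ℝ) (y : Fin k → ℝ) (j : Fin k) :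
    (Fin.cons a (fun i => y i + a) : Fin (k + 1) → ℝ) j.succ
      - prev (Fin.cons a (fun i => y i + a)) j.succ = y j - prev y j := by
  have hsv : ((j.succ : Fin (k + 1)) : ℕ) = (j : ℕ) + 1 := rfl
  rw [Fin.cons_succ]
  rw [prev_eq _ _ (by omega)]
  by_cases hj : (j : ℕ) = 0
  · have h0 : (⟨((j.succ : Fin (k+1)) : ℕ) - 1, by omega⟩ : Fin (k + 1)) = 0 := by
      ext; simp [hsv, hj]
    rw [h0, Fin.cons_zero, prev_eq_zero _ _ hj]
    ring
  · have h1 : (⟨((j.succ : Fin (k+1)) : ℕ) - 1, by omega⟩ : Fin (k + 1)) =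
        ⟨((j : ℕ) - 1) + 1, by have := j.isLt; omega⟩ := by
      ext; simp [hsv]; omega
    rw [h1, cons_mk_succ, prev_eq _ _ hj]
    ring

lemma diff_cons_zero {k : ℕ} (a : ℝ) (y : Fin k → ℝ) :
    (Fin.cons a y : Fin (k + 1) → ℝ) 0 - prev (Fin.cons a y) 0 = a := by
  rw [Fin.cons_zero, prev_eq_zero _ _ rfl, sub_zero]

/-- Splitting a `lintegral` over `Fin (k+1) → ℝ` along the first coordinate. -/
lemma lintegral_cons {k : ℕ} (f : (Fin (k + 1) → ℝ) → ENNReal) (hf : Measurable f) :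
    ∫⁻ x : Fin (k + 1) → ℝ, f x = ∫⁻ a : ℝ, ∫⁻ y : Fin k → ℝ, f (Fin.cons a y) := by
  have e := (volume_preserving_piFinSuccAbove (fun _ : Fin (k + 1) => ℝ) 0).symm
  rw [← e.lintegral_comp hf]
  rw [Measure.volume_eq_prod]
  rw [MeasureTheory.lintegral_prod (fun z => f ((MeasurableEquiv.piFinSuccAbove
      (fun _ : Fin (k+1) => ℝ) 0).symm z))
    (hf.comp (MeasurableEquiv.piFinSuccAbove
      (fun _ : Fin (k+1) => ℝ) 0).symm.measurable).aemeasurable]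
  congr 1
  ext z
  congr 1
  simp [MeasurableEquiv.piFinSuccAbove_symm_apply, Fin.insertNthEquiv,
    Fin.insertNth_zero']

/-- The chain rule for lintegrals of products of functions of increments. -/
lemma chain_lintegral : ∀ (k : ℕ) (q : Fin k → ℝ → ENNReal), (∀ j, Measurable (q j)) →
    ∫⁻ x : Fin k → ℝ, ∏ j, q j (x j - prev x j) = ∏ j, ∫⁻ y : ℝ, q j y := by
  intro k
  induction k with
  | zero =>
      intro q hq
      simp only [Finset.univ_eq_empty, Finset.prod_empty]
      rw [lintegral_const, one_mul]
      rw [show (volume : Measure (Fin 0 → ℝ)) = Measure.pi (fun _ => volume) from rfl,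
        Measure.pi_univ]
      simp
  | succ k ih =>
      intro q hq
      have hfm : Measurable (fun x : Fin (k + 1) → ℝ => ∏ j, q j (x j - prev x j)) := by
        apply Finset.measurable_prod
        intro j _
        exact (hq j).comp ((measurable_pi_apply j).sub (measurable_prev j))
      rw [lintegral_cons _ hfm]
      have key : ∀ a : ℝ, (∫⁻ y : Fin k → ℝ, ∏ j, q j ((Fin.cons a y : Fin (k+1) → ℝ) j - prev (Fin.cons a y : Fin (k+1) → ℝ) j))
          = q 0 a * ∏ j : Fin k, ∫⁻ y : ℝ, q j.succ y := by
        intro a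
        have := lintegral_add_right_eq_self
          (μ := (volume : Measure (Fin k → ℝ)))
          (fun y : Fin k → ℝ => ∏ j, q j ((Fin.cons a y : Fin (k+1) → ℝ) j - prev (Fin.cons a y : Fin (k+1) → ℝ) j))
          (fun _ => a)
        rw [← this]
        have ptw : ∀ y : Fin k → ℝ,
            (∏ j, q j ((Fin.cons a (y + fun _ => a) : Fin (k+1) → ℝ) j - prev (Fin.cons a (y + fun _ => a) : Fin (k+1) → ℝ) j))
            = q 0 a * ∏ j : Fin k, q j.succ (y j - prev y j) := by
          intro y
          have hy : (y + fun _ => a) = fun i => y i + a := rfl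
          rw [hy, Fin.prod_univ_succ]
          congr 1
          · rw [diff_cons_zero]
          · apply Finset.prod_congr rfl
            intro j _
            congr 1
            have := diff_cons_shift a y j
            simpa using this
        calc ∫⁻ (y : Fin k → ℝ), ∏ j, q j
              ((Fin.cons a (y + fun _ => a) : Fin (k+1) → ℝ) j - prev (Fin.cons a (y + fun _ => a) : Fin (k+1) → ℝ) j)
            = ∫⁻ (y : Fin k → ℝ), q 0 a * ∏ j : Fin k, q j.succ (y j - prev y j) :=
              lintegral_congr ptw
          _ = q 0 a * ∫⁻ (y : Fin k → ℝ), ∏ j : Fin k, q j.succ (y j - prev y j) := by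
              rw [lintegral_const_mul]
              apply Finset.measurable_prod
              intro j _
              exact (hq j.succ).comp ((measurable_pi_apply j).sub (measurable_prev j))
          _ = q 0 a * ∏ j : Fin k, ∫⁻ y : ℝ, q j.succ y := by
              rw [ih (fun j => q j.succ) (fun j => hq j.succ)]
      calc ∫⁻ a : ℝ, ∫⁻ y : Fin k → ℝ, ∏ j, q j ((Fin.cons a y : Fin (k+1) → ℝ) j - prev (Fin.cons a y : Fin (k+1) → ℝ) j)
          = ∫⁻ a : ℝ, q 0 a * ∏ j : Fin k, ∫⁻ y : ℝ, q j.succ y := by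
            congr 1; ext a; exact key a
        _ = (∫⁻ a : ℝ, q 0 a) * ∏ j : Fin k, ∫⁻ y : ℝ, q j.succ y := by
            rw [lintegral_mul_const _ (hq 0)]
        _ = ∏ j, ∫⁻ y : ℝ, q j y := by rw [Fin.prod_univ_succ]

lemma heatKernel_sq {s : ℝ} (hs : 0 < s) (a b : ℝ) :
    heatKernel s a b ^ 2 = (2 * π * s)⁻¹ * Real.exp (-s⁻¹ * (b - a) ^ 2) := by
  have h1 : (0:ℝ) < 2 * π * s := by positivity
  unfold heatKernel
  rw [mul_pow, div_pow, one_pow, Real.sq_sqrt h1.le, sq, ← Real.exp_add, one_div]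
  congr 1
  field_simp
  ring

lemma gauss_integrable {s : ℝ} (hs : 0 < s) :
    Integrable (fun y : ℝ => (2 * π * s)⁻¹ * Real.exp (-s⁻¹ * y ^ 2)) :=
  (integrable_exp_neg_mul_sq (by positivity)).const_mul _

lemma gauss_integral {s : ℝ} (hs : 0 < s) :
    ∫ y : ℝ, (2 * π * s)⁻¹ * Real.exp (-s⁻¹ * y ^ 2) = (2 * Real.sqrt (π * s))⁻¹ := by
  rw [MeasureTheory.integral_const_mul, integral_gaussian]
  have h0 : (0:ℝ) < π * s := by positivity
  have hps : π / s⁻¹ = π * s := by field_simp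
  rw [hps]
  have h2 : Real.sqrt (π * s) ≠ 0 := by positivity
  have h3 : 2 * π * s = 2 * (Real.sqrt (π * s)) ^ 2 := by rw [Real.sq_sqrt h0.le]; ring
  rw [h3]
  field_simp

lemma gauss_lintegral {s : ℝ} (hs : 0 < s) :
    ∫⁻ y : ℝ, ENNReal.ofReal ((2 * π * s)⁻¹ * Real.exp (-s⁻¹ * y ^ 2))
      = ENNReal.ofReal ((2 * Real.sqrt (π * s))⁻¹) := by
  rw [← ofReal_integral_eq_lintegral_ofReal (gauss_integrable hs)
    (Filter.Eventually.of_forall fun y => by positivity), gauss_integral hs]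

lemma inner_integral {k : ℕ} (t : Fin k → ℝ) (ht : ∀ j, 0 < t j - prev t j) :
    ∫ x : Fin k → ℝ, heatKernelFold t x ^ 2
      = ∏ j, (2 * Real.sqrt (π * (t j - prev t j)))⁻¹ := by
  set q : Fin k → ℝ → ℝ := fun j d => (2 * π * (t j - prev t j))⁻¹ *
    Real.exp (-(t j - prev t j)⁻¹ * d ^ 2) with hq
  have hptw : ∀ x, heatKernelFold t x ^ 2 = ∏ j, q j (x j - prev x j) := by
    intro x
    rw [heatKernelFold, ← Finset.prod_pow]
    exact Finset.prod_congr rfl fun j _ => heatKernel_sq (ht j) _ _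
  have hqmeas : ∀ j, Measurable (q j) := by
    intro j
    apply Measurable.const_mul
    exact Real.measurable_exp.comp (measurable_const.mul (measurable_id.pow_const 2))
  have hmeas : Measurable fun x : Fin k → ℝ => heatKernelFold t x ^ 2 := by
    have h1 : Measurable fun x : Fin k → ℝ => ∏ j, q j (x j - prev x j) :=
      Finset.measurable_prod _ fun j _ =>
        (hqmeas j).comp ((measurable_pi_apply j).sub (measurable_prev j))
    have hfe : (fun x : Fin k → ℝ => heatKernelFold t x ^ 2)
        = fun x => ∏ j, q j (x j - prev x j) := funext hptw
    rw [hfe]; exact h1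
  rw [integral_eq_lintegral_of_nonneg_ae (Filter.Eventually.of_forall fun x => sq_nonneg _)
    hmeas.aestronglyMeasurable]
  have key : ∫⁻ x : Fin k → ℝ, ENNReal.ofReal (heatKernelFold t x ^ 2)
      = ENNReal.ofReal (∏ j, (2 * Real.sqrt (π * (t j - prev t j)))⁻¹) := by
    calc ∫⁻ x : Fin k → ℝ, ENNReal.ofReal (heatKernelFold t x ^ 2)
        = ∫⁻ x : Fin k → ℝ, ∏ j, ENNReal.ofReal (q j (x j - prev x j)) := by
          apply lintegral_congr; intro x
          rw [hptw x, ← ENNReal.ofReal_prod_of_nonneg]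
          intro j _
          have := ht j
          positivity
      _ = ∏ j, ∫⁻ y : ℝ, ENNReal.ofReal (q j y) :=
          chain_lintegral k _ fun j => ENNReal.measurable_ofReal.comp (hqmeas j)
      _ = ∏ j, ENNReal.ofReal ((2 * Real.sqrt (π * (t j - prev t j)))⁻¹) :=
          Finset.prod_congr rfl fun j _ => gauss_lintegral (ht j)
      _ = ENNReal.ofReal (∏ j, (2 * Real.sqrt (π * (t j - prev t j)))⁻¹) := by
          rw [← ENNReal.ofReal_prod_of_nonneg]
          intro j _
          have := ht j
          positivity
  rw [key, ENNReal.toReal_ofReal]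
  apply Finset.prod_nonneg
  intro j _
  have := ht j
  positivity

lemma mem_simplex_iff {k : ℕ} (t : Fin k → ℝ) :
    t ∈ simplex k ↔ (∀ j, 0 < t j - prev t j) ∧ ∀ j, t j ≤ 1 := by
  constructor
  · rintro ⟨hmono, hmem⟩
    refine ⟨fun j => ?_, fun j => (hmem j).2⟩
    by_cases h : (j : ℕ) = 0
    · rw [prev_eq_zero _ _ h]
      simpa using (hmem j).1
    · rw [prev_eq _ _ h]
      have hlt : (⟨(j:ℕ)-1, by have := j.isLt; omega⟩ : Fin k) < j := by
        rw [Fin.lt_def]; simp; omega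
      linarith [hmono hlt]
  · rintro ⟨hd, hle⟩
    have hpos : ∀ n (j : Fin k), (j:ℕ) ≤ n → 0 < t j := by
      intro n
      induction n with
      | zero =>
          intro j hj
          have h0 : (j:ℕ) = 0 := by omega
          have := hd j
          rw [prev_eq_zero _ _ h0] at this
          linarith
      | succ n ih =>
          intro j hj
          by_cases h : (j:ℕ) = 0
          · have := hd j
            rw [prev_eq_zero _ _ h] at this
            linarith
          · have h1 := hd j
            rw [prev_eq _ _ h] at h1
            have h2 := ih ⟨(j:ℕ)-1, by have := j.isLt; omega⟩ (by simp; omega)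
            linarith
    constructor
    · cases k with
      | zero => intro i j hij; exact i.elim0
      | succ m =>
          rw [Fin.strictMono_iff_lt_succ]
          intro i
          have h1 := hd i.succ
          have h2 : prev t i.succ = t i.castSucc := by
            rw [prev_eq _ _ (by simp [Fin.val_succ])]
            congr 1
          rw [h2] at h1
          linarith
    · exact fun j => ⟨hpos (j:ℕ) j le_rfl, hle j⟩

noncomputable def G (s : ℝ) : ENNReal := ENNReal.ofReal ((2 * Real.sqrt (π * s))⁻¹)

lemma g_nonpos {s : ℝ} (hs : s ≤ 0) : (2 * Real.sqrt (π * s))⁻¹ = 0 := by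
  rw [Real.sqrt_eq_zero'.mpr (by nlinarith [pi_pos])]
  simp

lemma G_nonpos {s : ℝ} (hs : s ≤ 0) : G s = 0 := by
  rw [G, g_nonpos hs, ENNReal.ofReal_zero]

lemma measurable_g : Measurable fun s : ℝ => (2 * Real.sqrt (π * s))⁻¹ :=
  ((continuous_const.mul (Real.continuous_sqrt.comp
    (continuous_const.mul continuous_id))).measurable).inv

lemma measurable_G : Measurable G := ENNReal.measurable_ofReal.comp measurable_g

open scoped Classical in
/-- The integrand for the simplex integral: product of `G` of increments times the indicator
of the constraint `∀ j, x j ≤ T`. -/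
noncomputable def W (k : ℕ) (T : ℝ) (x : Fin k → ℝ) : ENNReal :=
  (∏ j, G (x j - prev x j)) * (if ∀ j, x j ≤ T then 1 else 0)

lemma measurable_W (k : ℕ) (T : ℝ) : Measurable (W k T) := by
  classical
  apply Measurable.mul
  · exact Finset.measurable_prod _ fun j _ =>
      measurable_G.comp ((measurable_pi_apply j).sub (measurable_prev j))
  · have hs : MeasurableSet {x : Fin k → ℝ | ∀ j, x j ≤ T} := by
      have : {x : Fin k → ℝ | ∀ j, x j ≤ T} = ⋂ j, {x | x j ≤ T} := by
        ext x; simp [Set.mem_iInter]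
      rw [this]
      exact MeasurableSet.iInter fun j =>
        measurableSet_le (measurable_pi_apply j) measurable_const
    exact Measurable.ite hs measurable_const measurable_const

lemma W_nonpos {k : ℕ} (hk : 0 < k) {T : ℝ} (hT : T ≤ 0) (x : Fin k → ℝ) : W k T x = 0 := by
  classical
  set j0 : Fin k := ⟨0, hk⟩ with hj0
  by_cases h : 0 < x j0 - prev x j0
  · rw [prev_eq_zero x j0 rfl, sub_zero] at h
    have : ¬ ∀ j, x j ≤ T := by
      push_neg
      exact ⟨j0, by linarith⟩
    rw [W, if_neg this, mul_zero]
  · rw [W, Finset.prod_eq_zero (Finset.mem_univ j0) (G_nonpos (by linarith)), zero_mul]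

lemma betaReal {u v : ℝ} (hu : 0 < u) (hv : 0 < v) :
    ∫ x in (0:ℝ)..1, x ^ (u - 1) * (1 - x) ^ (v - 1)
      = Real.Gamma u * Real.Gamma v / Real.Gamma (u + v) := by
  have hc := Complex.Gamma_mul_Gamma_eq_betaIntegral (s := (u:ℂ)) (t := (v:ℂ))
    (by simpa using hu) (by simpa using hv)
  have hbeta : Complex.betaIntegral (u:ℂ) (v:ℂ)
      = ((∫ x in (0:ℝ)..1, x ^ (u - 1) * (1 - x) ^ (v - 1) : ℝ) : ℂ) := by
    rw [Complex.betaIntegral, ← intervalIntegral.integral_ofReal]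
    apply intervalIntegral.integral_congr
    intro x hx
    rw [Set.uIcc_of_le (by norm_num : (0:ℝ) ≤ 1)] at hx
    obtain ⟨hx0, hx1⟩ := hx
    dsimp only
    rw [Complex.ofReal_mul, Complex.ofReal_cpow hx0, Complex.ofReal_cpow (by linarith)]
    push_cast
    ring
  rw [hbeta] at hc
  rw [show ((u:ℂ) + (v:ℂ)) = (((u + v : ℝ)):ℂ) by push_cast; ring] at hc
  rw [Complex.Gamma_ofReal, Complex.Gamma_ofReal, Complex.Gamma_ofReal] at hc
  have hr : Real.Gamma u * Real.Gamma v
      = Real.Gamma (u + v) * ∫ x in (0:ℝ)..1, x ^ (u - 1) * (1 - x) ^ (v - 1) := by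
    exact_mod_cast hc
  have hne : Real.Gamma (u + v) ≠ 0 := (Real.Gamma_pos_of_pos (by linarith)).ne'
  rw [eq_div_iff hne]
  linarith [hr]

lemma betaIntegrableOn {T : ℝ} (hT : 0 < T) {v : ℝ} (hv : 1 < v) :
    IntegrableOn (fun x : ℝ => x ^ ((1:ℝ)/2 - 1) * (T - x) ^ (v - 1)) (Set.Ioo 0 T) := by
  have h1 : IntegrableOn (fun x : ℝ => x ^ ((1:ℝ)/2 - 1)) (Set.Ioo 0 T) :=
    ((intervalIntegral.intervalIntegrable_rpow' (by norm_num)).1).mono_set Set.Ioo_subset_Ioc_self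
  apply Integrable.mono' (h1.const_mul (T ^ (v - 1)))
  · apply ContinuousOn.aestronglyMeasurable _ measurableSet_Ioo
    intro x hx
    obtain ⟨hx0, hxT⟩ := hx
    apply ContinuousAt.continuousWithinAt
    exact ((Real.continuousAt_rpow_const x _ (Or.inl hx0.ne')).mul
      (((continuous_const.sub continuous_id).continuousAt).rpow_const
        (Or.inl (by simp; linarith))))
  · rw [ae_restrict_iff' measurableSet_Ioo]
    apply Filter.Eventually.of_forall
    intro x hx
    obtain ⟨hx0, hxT⟩ := hx
    rw [Real.norm_eq_abs, abs_of_nonneg (mul_nonneg (Real.rpow_nonneg hx0.le _)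
      (Real.rpow_nonneg (by linarith) _))]
    have h2 : (T - x) ^ (v - 1) ≤ T ^ (v - 1) :=
      Real.rpow_le_rpow (by linarith) (by linarith) (by linarith)
    have h3 : (0:ℝ) ≤ x ^ ((1:ℝ)/2 - 1) := Real.rpow_nonneg hx0.le _
    calc x ^ ((1:ℝ)/2 - 1) * (T - x) ^ (v - 1) ≤ x ^ ((1:ℝ)/2 - 1) * T ^ (v - 1) := by
          exact mul_le_mul_of_nonneg_left h2 h3
      _ = T ^ (v - 1) * x ^ ((1:ℝ)/2 - 1) := by ring

lemma betaScaled {T : ℝ} (hT : 0 < T) {v : ℝ} (hv : 1 < v) :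
    ∫ x in (0:ℝ)..T, x ^ ((1:ℝ)/2 - 1) * (T - x) ^ (v - 1)
      = T ^ (v - 1/2) * (Real.Gamma (1/2) * Real.Gamma v / Real.Gamma (1/2 + v)) := by
  have hsub := intervalIntegral.smul_integral_comp_mul_right
    (a := (0:ℝ)) (b := 1) (fun x => x ^ ((1:ℝ)/2 - 1) * (T - x) ^ (v - 1)) T
  rw [zero_mul, one_mul] at hsub
  rw [← hsub]
  have heq : Set.EqOn (fun y : ℝ => (y * T) ^ ((1:ℝ)/2 - 1) * (T - y * T) ^ (v - 1))
      (fun y : ℝ => T ^ (v - 3/2) * (y ^ ((1:ℝ)/2 - 1) * (1 - y) ^ (v - 1)))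
      (Set.uIcc 0 1) := by
    intro y hy
    rw [Set.uIcc_of_le (by norm_num : (0:ℝ) ≤ 1)] at hy
    obtain ⟨hy0, hy1⟩ := hy
    simp only
    rw [Real.mul_rpow hy0 hT.le,
      show T - y * T = (1 - y) * T by ring,
      Real.mul_rpow (by linarith) hT.le,
      show T ^ (v - 3/2) = T ^ ((1:ℝ)/2 - 1) * T ^ (v - 1) by
        rw [← Real.rpow_add hT]; congr 1; ring]
    ring
  rw [intervalIntegral.integral_congr heq, intervalIntegral.integral_const_mul,
    betaReal (by norm_num) (by linarith), smul_eq_mul,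
    show (1:ℝ)/2 + v = v + 1/2 by ring]
  have hTT : T ^ (v - 1/2) = T * T ^ (v - 3/2) := by
    rw [show v - 1/2 = 1 + (v - 3/2) by ring, Real.rpow_add hT, Real.rpow_one]
  rw [hTT]
  ring

lemma W_one_eq (T : ℝ) (a : ℝ) : W 1 T (fun _ => a) = (Set.Ioc 0 T).indicator G a := by
  classical
  rw [W, Fin.prod_univ_one, prev_eq_zero _ 0 rfl, sub_zero]
  by_cases h1 : a ∈ Set.Ioc 0 T
  · rw [Set.indicator_of_mem h1, if_pos (fun _ => h1.2), mul_one]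
  · rw [Set.indicator_of_notMem h1]
    rw [Set.mem_Ioc, not_and_or] at h1
    rcases h1 with h1 | h1
    · rw [G_nonpos (by push_neg at h1; linarith), zero_mul]
    · push_neg at h1
      rw [if_neg (fun hall => absurd (hall 0) (by push_neg; exact h1)), mul_zero]

lemma sqrt_inv_eqOn {T : ℝ} (hT : 0 < T) : ∀ x ∈ Set.Ioc (0:ℝ) T,
    (2 * Real.sqrt π)⁻¹ * x ^ (-(1:ℝ)/2) = (2 * Real.sqrt (π * x))⁻¹ := by
  intro x hx
  have h1 : Real.sqrt π ≠ 0 := by positivity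
  have h2 : (0:ℝ) < x ^ ((1:ℝ)/2) := Real.rpow_pos_of_pos hx.1 _
  rw [Real.sqrt_mul pi_nonneg, Real.sqrt_eq_rpow x,
    show (-(1:ℝ)/2) = -((1:ℝ)/2) by ring, Real.rpow_neg hx.1.le]
  field_simp

lemma W_lintegral_one (T : ℝ) (hT : 0 < T) :
    ∫⁻ x : Fin 1 → ℝ, W 1 T x
      = ENNReal.ofReal (T ^ ((1:ℝ)/2) / (2 ^ 1 * Real.Gamma ((1:ℝ)/2 + 1))) := by
  have mp := (volume_preserving_funUnique (Fin 1) ℝ).symm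
  refine Eq.trans (mp.lintegral_comp (measurable_W 1 T)).symm ?_
  have hpt : ∀ a : ℝ, W 1 T ((MeasurableEquiv.funUnique (Fin 1) ℝ).symm a)
      = (Set.Ioc 0 T).indicator G a := fun a => W_one_eq T a
  rw [lintegral_congr hpt, lintegral_indicator measurableSet_Ioc]
  have hInt : IntegrableOn (fun a : ℝ => (2 * Real.sqrt (π * a))⁻¹) (Set.Ioc 0 T) := by
    apply IntegrableOn.congr_fun
      (((intervalIntegral.intervalIntegrable_rpow' (r := -(1:ℝ)/2)
        (by norm_num)).1).const_mul ((2 * Real.sqrt π)⁻¹))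
      (sqrt_inv_eqOn hT) measurableSet_Ioc
  have hnn : 0 ≤ᵐ[volume.restrict (Set.Ioc (0:ℝ) T)]
      fun a : ℝ => (2 * Real.sqrt (π * a))⁻¹ :=
    Filter.Eventually.of_forall fun a => by positivity
  rw [show (fun a : ℝ => G a) = fun a => ENNReal.ofReal ((2 * Real.sqrt (π * a))⁻¹) from rfl,
    ← ofReal_integral_eq_lintegral_ofReal hInt hnn]
  congr 1
  rw [← MeasureTheory.setIntegral_congr_fun measurableSet_Ioc (sqrt_inv_eqOn hT),
    ← intervalIntegral.integral_of_le hT.le, intervalIntegral.integral_const_mul,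
    integral_rpow (Or.inl (by norm_num)),
    Real.Gamma_add_one (by norm_num), Real.Gamma_one_half_eq,
    Real.zero_rpow (by norm_num)]
  have h1 : Real.sqrt π > 0 := Real.sqrt_pos.mpr pi_pos
  have h2 : T ^ (-(1:ℝ)/2 + 1) = T ^ ((1:ℝ)/2) := by congr 1; ring
  rw [h2]
  field_simp
  ring

lemma W_lintegral : ∀ k, 1 ≤ k → ∀ T : ℝ, 0 < T →
    ∫⁻ x : Fin k → ℝ, W k T x
      = ENNReal.ofReal (T ^ ((k:ℝ)/2) / (2 ^ k * Real.Gamma ((k:ℝ)/2 + 1))) := by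
  intro k hk
  induction k, hk using Nat.le_induction with
  | base => intro T hT; exact_mod_cast W_lintegral_one T hT
  | succ k hk ih =>
      intro T hT
      classical
      rw [lintegral_cons _ (measurable_W (k+1) T)]
      have key : ∀ a : ℝ, (∫⁻ y : Fin k → ℝ, W (k+1) T (Fin.cons a y))
          = (Set.Ioo 0 T).indicator (fun a => ENNReal.ofReal ((2 * Real.sqrt (π * a))⁻¹ *
              ((T - a) ^ ((k:ℝ)/2) / (2 ^ k * Real.Gamma ((k:ℝ)/2 + 1))))) a := by
        intro a
        have h1 : (∫⁻ y : Fin k → ℝ, W (k+1) T (Fin.cons a y))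
            = G a * (if a ≤ T then 1 else 0) * ∫⁻ y : Fin k → ℝ, W k (T - a) y := by
          rw [← lintegral_add_right_eq_self
            (fun y : Fin k → ℝ => W (k+1) T (Fin.cons a y)) (fun _ => a)]
          have ptw : ∀ y : Fin k → ℝ, W (k+1) T (Fin.cons a (y + fun _ => a))
              = (G a * (if a ≤ T then 1 else 0)) * W k (T - a) y := by
            intro y
            have hy : (y + fun _ => a) = fun i => y i + a := rfl
            rw [W, W, hy, Fin.prod_univ_succ, diff_cons_zero]
            have hdiff : ∀ j : Fin k,
                (Fin.cons a (fun i => y i + a) : Fin (k+1) → ℝ) j.succ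
                  - prev (Fin.cons a (fun i => y i + a)) j.succ = y j - prev y j :=
              fun j => diff_cons_shift a y j
            rw [Finset.prod_congr rfl (fun j _ => by rw [hdiff j])]
            have hind : (if ∀ j : Fin (k+1), (Fin.cons a (fun i => y i + a) : Fin (k+1) → ℝ) j ≤ T
                then (1:ENNReal) else 0)
                = (if a ≤ T then 1 else 0) * (if ∀ j : Fin k, y j ≤ T - a then 1 else 0) := by
              have : (∀ j : Fin (k+1), (Fin.cons a (fun i => y i + a) : Fin (k+1) → ℝ) j ≤ T)
                  ↔ (a ≤ T ∧ ∀ j : Fin k, y j ≤ T - a) := by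
                rw [Fin.forall_fin_succ]
                simp only [Fin.cons_zero, Fin.cons_succ]
                constructor
                · rintro ⟨h0, hs⟩; exact ⟨h0, fun j => by linarith [hs j]⟩
                · rintro ⟨h0, hs⟩; exact ⟨h0, fun j => by linarith [hs j]⟩
              rw [if_congr this rfl rfl]
              by_cases hp : a ≤ T <;> by_cases hq : ∀ j : Fin k, y j ≤ T - a <;>
                simp [hp, hq]
            rw [hind]
            ring
          rw [lintegral_congr ptw, lintegral_const_mul _ (measurable_W k (T - a))]
        rw [h1]
        by_cases hmem : a ∈ Set.Ioo (0:ℝ) T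
        · obtain ⟨ha0, haT⟩ := hmem
          rw [Set.indicator_of_mem (Set.mem_Ioo.mpr ⟨ha0, haT⟩), if_pos haT.le, mul_one,
            ih (T - a) (by linarith), G, ← ENNReal.ofReal_mul (by positivity)]
        · rw [Set.indicator_of_notMem hmem]
          rw [Set.mem_Ioo, not_and_or] at hmem
          push_neg at hmem
          rcases hmem with h | h
          · rw [G_nonpos h, zero_mul, zero_mul]
          · rcases lt_or_eq_of_le h with h' | h'
            · rw [if_neg (by linarith), mul_zero, zero_mul]
            · have hz : ∀ y : Fin k → ℝ, W k (T - a) y = 0 :=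
                W_nonpos (by omega) (by linarith)
              rw [lintegral_congr hz, lintegral_zero, mul_zero]
      rw [lintegral_congr key, lintegral_indicator measurableSet_Ioo]
      set D : ℝ := 2 ^ k * Real.Gamma ((k:ℝ)/2 + 1) with hD
      have hDpos : 0 < D := by
        apply mul_pos (by positivity)
        exact Real.Gamma_pos_of_pos (by positivity)
      set v : ℝ := (k:ℝ)/2 + 1 with hv
      have hv1 : 1 < v := by
        rw [hv]
        have : (0:ℝ) < (k:ℝ)/2 := by positivity
        linarith
      have heqOn : Set.EqOn
          (fun a : ℝ => (2 * Real.sqrt π)⁻¹ / D * (a ^ ((1:ℝ)/2 - 1) * (T - a) ^ (v - 1)))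
          (fun a : ℝ => (2 * Real.sqrt (π * a))⁻¹ * ((T - a) ^ ((k:ℝ)/2) / D))
          (Set.Ioo 0 T) := by
        intro a ha
        obtain ⟨ha0, haT⟩ := ha
        simp only
        rw [show v - 1 = (k:ℝ)/2 by rw [hv]; ring]
        rw [← sqrt_inv_eqOn hT a ⟨ha0, haT.le⟩,
          show (1:ℝ)/2 - 1 = -(1:ℝ)/2 by ring]
        ring
      have hInt2 : IntegrableOn
          (fun a : ℝ => (2 * Real.sqrt (π * a))⁻¹ * ((T - a) ^ ((k:ℝ)/2) / D))
          (Set.Ioo 0 T) :=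
        IntegrableOn.congr_fun ((betaIntegrableOn hT hv1).const_mul _) heqOn measurableSet_Ioo
      have hnn2 : 0 ≤ᵐ[volume.restrict (Set.Ioo (0:ℝ) T)]
          fun a : ℝ => (2 * Real.sqrt (π * a))⁻¹ * ((T - a) ^ ((k:ℝ)/2) / D) := by
        filter_upwards [ae_restrict_mem measurableSet_Ioo] with a ha
        have h1 : (0:ℝ) ≤ (2 * Real.sqrt (π * a))⁻¹ := by positivity
        have h2 : (0:ℝ) ≤ (T - a) ^ ((k:ℝ)/2) := Real.rpow_nonneg (by linarith [ha.2]) _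
        positivity
      rw [← ofReal_integral_eq_lintegral_ofReal hInt2 hnn2]
      congr 1
      rw [← MeasureTheory.setIntegral_congr_fun measurableSet_Ioo heqOn,
        MeasureTheory.integral_const_mul, ← MeasureTheory.integral_Ioc_eq_integral_Ioo,
        ← intervalIntegral.integral_of_le hT.le, betaScaled hT hv1]
      rw [Real.Gamma_one_half_eq]
      push_cast
      rw [show ((k:ℝ)+1)/2 = v - 1/2 by rw [hv]; ring,
        show v - 1/2 + 1 = 1/2 + v by ring, hD]
      have hGv : Real.Gamma v ≠ 0 := (Real.Gamma_pos_of_pos (by linarith)).ne'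
      have hG2 : Real.Gamma (1/2 + v) ≠ 0 :=
        (Real.Gamma_pos_of_pos (by rw [hv]; positivity)).ne'
      have hsp : Real.sqrt π ≠ 0 := by positivity
      rw [pow_succ]
      field_simp

lemma measurableSet_simplex (k : ℕ) : MeasurableSet (simplex k) := by
  have h1 : simplex k = {t : Fin k → ℝ | StrictMono t}
      ∩ ⋂ j, (fun t : Fin k → ℝ => t j) ⁻¹' (Set.Ioc 0 1) := by
    ext t
    simp only [simplex, Set.mem_setOf_eq, Set.mem_inter_iff, Set.mem_iInter, Set.mem_preimage]
  rw [h1]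
  apply MeasurableSet.inter
  · have h2 : {t : Fin k → ℝ | StrictMono t}
        = ⋂ i, ⋂ j, ⋂ (_ : i < j), {t : Fin k → ℝ | t i < t j} := by
      ext t
      simp only [Set.mem_setOf_eq, Set.mem_iInter]
      exact ⟨fun h i j hij => h hij, fun h a b hab => h a b hab⟩
    rw [h2]
    exact MeasurableSet.iInter fun i => MeasurableSet.iInter fun j => MeasurableSet.iInter
      fun _ => measurableSet_lt (measurable_pi_apply i) (measurable_pi_apply j)
  · exact MeasurableSet.iInter fun j => measurableSet_Ioc.preimage (measurable_pi_apply j)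

end HKAux

/-- The squared `L²` norm of the `k`-fold standard heat kernel over the simplex equals
`1 / (2^k Γ(k/2 + 1))`. -/
theorem integral_heatKernelFold_sq (k : ℕ) (hk : 1 ≤ k) :
    ∫ t in simplex k, ∫ x : Fin k → ℝ, (heatKernelFold t x) ^ 2 =
      1 / (2 ^ k * Real.Gamma ((k : ℝ) / 2 + 1)) := by
  classical
  have hsm := HKAux.measurableSet_simplex k
  have hcongr : Set.EqOn (fun t : Fin k → ℝ => ∫ x : Fin k → ℝ, heatKernelFold t x ^ 2)
      (fun t : Fin k → ℝ => ∏ j, (2 * Real.sqrt (π * (t j - prev t j)))⁻¹) (simplex k) :=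
    fun t ht => HKAux.inner_integral t ((HKAux.mem_simplex_iff t).1 ht).1
  rw [MeasureTheory.setIntegral_congr_fun hsm hcongr]
  have hm : Measurable fun t : Fin k → ℝ => ∏ j, (2 * Real.sqrt (π * (t j - prev t j)))⁻¹ :=
    Finset.measurable_prod _ fun j _ => HKAux.measurable_g.comp
      ((measurable_pi_apply j).sub (HKAux.measurable_prev j))
  rw [MeasureTheory.integral_eq_lintegral_of_nonneg_ae
    (Filter.Eventually.of_forall fun t => Finset.prod_nonneg fun j _ => by positivity)
    hm.aestronglyMeasurable.restrict]
  have hlint : (∫⁻ t in simplex k,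
        ENNReal.ofReal (∏ j, (2 * Real.sqrt (π * (t j - prev t j)))⁻¹))
      = ∫⁻ t, HKAux.W k 1 t := by
    rw [← lintegral_indicator hsm]
    apply lintegral_congr
    intro t
    by_cases ht : t ∈ simplex k
    · rw [Set.indicator_of_mem ht, HKAux.W]
      obtain ⟨hd, hle⟩ := (HKAux.mem_simplex_iff t).1 ht
      rw [if_pos hle, mul_one, ENNReal.ofReal_prod_of_nonneg (fun j _ => by positivity)]
      rfl
    · rw [Set.indicator_of_notMem ht]
      symm
      have hnot : ¬ ((∀ j, 0 < t j - prev t j) ∧ ∀ j, t j ≤ 1) :=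
        fun h => ht ((HKAux.mem_simplex_iff t).2 h)
      rw [HKAux.W]
      rcases not_and_or.mp hnot with h | h
      · push_neg at h
        obtain ⟨j, hj⟩ := h
        rw [Finset.prod_eq_zero (Finset.mem_univ j) (HKAux.G_nonpos (by linarith)), zero_mul]
      · rw [if_neg h, mul_zero]
  rw [hlint, HKAux.W_lintegral k hk 1 one_pos, Real.one_rpow]
  have hpos : 0 < 2 ^ k * Real.Gamma ((k:ℝ)/2 + 1) :=
    mul_pos (by positivity) (Real.Gamma_pos_of_pos (by positivity))
  rw [ENNReal.toReal_ofReal (by positivity)]
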